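/- For every integer m ≥ 1 and every integer n with 0 ≤ n ≤ 2m − 1, one has ∑_{j=1}^{m} U_n(cos((2j−1)π/(4m))) · cos^n((2j−1)π/(4m)) = m, where U_n is the n-th Chebyshev polynomial of the second kind. -/

import Mathlib

open Real Polynomial

lemma tele (α : ℝ) (M : ℕ) :
    (∑ j ∈ Finset.Icc 1 M, Real.cos ((2 * j - 1) * α)) * (2 * Real.sin α)
      = Real.sin (2 * M * α) := by
  induction M with
  | zero => simp
  | succ M ih =>
    rw [Finset.sum_Icc_succ_top (by omega : 1 ≤ M + 1), add_mul, ih]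
    have h := Real.sin_sub_sin (2 * ((M:ℝ) + 1) * α) (2 * M * α)
    have h1 : (2 * ((M:ℝ) + 1) * α - 2 * M * α) / 2 = α := by ring
    have h2 : (2 * ((M:ℝ) + 1) * α + 2 * M * α) / 2 = (2 * ((M:ℝ) + 1) - 1) * α := by ring
    rw [h1, h2] at h
    push_cast
    linarith [h]

lemma base (m : ℕ) (hm : 1 ≤ m) (a : ℕ) (he : Even a) (ha0 : 0 < a) (ha : a < 4 * m) :
    ∑ j ∈ Finset.Icc 1 m, Real.cos ((a : ℝ) * ((2 * j - 1) * Real.pi / (4 * m))) = 0 := by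
  have hm0 : (m : ℝ) ≠ 0 := by positivity
  set α := (a : ℝ) * Real.pi / (4 * m) with hα
  have hre : ∀ j ∈ Finset.Icc 1 m, Real.cos ((a : ℝ) * ((2 * j - 1) * Real.pi / (4 * m)))
      = Real.cos ((2 * j - 1) * α) := by
    intro j _
    congr 1
    field_simp [hα]
    rw [hα]; field_simp
  rw [Finset.sum_congr rfl hre]
  have ht := tele α m
  obtain ⟨r, hr⟩ := he
  have hsin2m : Real.sin (2 * (m : ℝ) * α) = 0 := by
    have : 2 * (m : ℝ) * α = r * Real.pi := by
      rw [hα]; field_simp; push_cast [hr]; ring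
    rw [this]
    exact Real.sin_nat_mul_pi r
  rw [hsin2m] at ht
  have hsα : Real.sin α ≠ 0 := by
    apply ne_of_gt
    apply Real.sin_pos_of_pos_of_lt_pi
    · rw [hα]
      have : 0 < (a:ℝ) := by exact_mod_cast ha0
      positivity
    · rw [hα, div_lt_iff₀ (by positivity)]
      have : (a : ℝ) < 4 * m := by exact_mod_cast ha
      nlinarith [Real.pi_pos]
  rcases mul_eq_zero.mp ht with h | h
  · exact h
  · exact absurd (by linarith [h] : Real.sin α = 0) hsα

lemma Ezero (m : ℕ) (hm : 1 ≤ m) : ∀ b a : ℕ, Even (a + b) → b + 2 ≤ a → a + b ≤ 4 * m - 2 →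
    ∑ j ∈ Finset.Icc 1 m, Real.cos ((a : ℝ) * ((2 * j - 1) * Real.pi / (4 * m)))
        * (Real.cos ((2 * j - 1) * Real.pi / (4 * m))) ^ b = 0 := by
  intro b
  induction b with
  | zero =>
    intro a he h2 h4
    simp only [pow_zero, mul_one]
    exact base m hm a (by simpa using he) (by omega) (by omega)
  | succ b ih =>
    intro a he h2 h4
    have key : ∀ j ∈ Finset.Icc 1 m,
        Real.cos ((a : ℝ) * ((2 * j - 1) * Real.pi / (4 * m)))
          * (Real.cos ((2 * j - 1) * Real.pi / (4 * m))) ^ (b + 1)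
        = (Real.cos (((a + 1 : ℕ) : ℝ) * ((2 * j - 1) * Real.pi / (4 * m)))
            * (Real.cos ((2 * j - 1) * Real.pi / (4 * m))) ^ b) / 2
          + (Real.cos (((a - 1 : ℕ) : ℝ) * ((2 * j - 1) * Real.pi / (4 * m)))
            * (Real.cos ((2 * j - 1) * Real.pi / (4 * m))) ^ b) / 2 := by
      intro j _
      set θ := (2 * (j:ℝ) - 1) * Real.pi / (4 * m) with hθ
      have hc := Real.cos_add_cos ((a + 1 : ℝ) * θ) ((a - 1 : ℝ) * θ)
      have e1 : ((a:ℝ) + 1) * θ + ((a:ℝ) - 1) * θ = 2 * ((a:ℝ) * θ) := by ring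
      have e2 : (((a:ℝ) + 1) * θ + ((a:ℝ) - 1) * θ) / 2 = (a:ℝ) * θ := by ring
      have e3 : (((a:ℝ) + 1) * θ - ((a:ℝ) - 1) * θ) / 2 = θ := by ring
      rw [e2, e3] at hc
      have hcast1 : (((a + 1 : ℕ) : ℝ)) = (a:ℝ) + 1 := by push_cast; ring
      have hcast2 : (((a - 1 : ℕ) : ℝ)) = (a:ℝ) - 1 := by
        have : 1 ≤ a := by omega
        push_cast [this]; ring
      rw [hcast1, hcast2, pow_succ]
      linear_combination (-(Real.cos θ ^ b) / 2) * hc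
    have hev1 : Even (a + 1 + b) := by
      rwa [show a + 1 + b = a + (b + 1) from by omega]
    have hev2 : Even (a - 1 + b) := by
      obtain ⟨r, hr⟩ := he
      exact ⟨r - 1, by omega⟩
    rw [Finset.sum_congr rfl key, Finset.sum_add_distrib, ← Finset.sum_div, ← Finset.sum_div,
      ih (a + 1) hev1 (by omega) (by omega), ih (a - 1) hev2 (by omega) (by omega)]
    norm_num

lemma step (θ : ℝ) (hs : Real.sin θ ≠ 0) (n : ℕ) :
    (Polynomial.Chebyshev.U ℝ ((n : ℤ) + 1)).eval (Real.cos θ) * Real.cos θ ^ (n + 1)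
      = (Polynomial.Chebyshev.U ℝ (n : ℤ)).eval (Real.cos θ) * Real.cos θ ^ n
        + Real.cos (((n : ℝ) + 2) * θ) * Real.cos θ ^ n := by
  apply mul_right_cancel₀ hs
  have h1 := Polynomial.Chebyshev.U_real_cos θ ((n : ℤ) + 1)
  have h2 := Polynomial.Chebyshev.U_real_cos θ (n : ℤ)
  push_cast at h1 h2
  have hsub : Real.sin (((n : ℝ) + 2) * θ - θ)
      = Real.sin (((n : ℝ) + 2) * θ) * Real.cos θ
        - Real.cos (((n : ℝ) + 2) * θ) * Real.sin θ := Real.sin_sub _ _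
  have e1 : ((n : ℝ) + 2) * θ - θ = ((n : ℝ) + 1) * θ := by ring
  rw [e1] at hsub
  have e2 : ((n : ℝ) + 1 + 1) * θ = ((n : ℝ) + 2) * θ := by ring
  rw [e2] at h1
  calc (Polynomial.Chebyshev.U ℝ ((n : ℤ) + 1)).eval (Real.cos θ) * Real.cos θ ^ (n + 1)
        * Real.sin θ
      = ((Polynomial.Chebyshev.U ℝ ((n : ℤ) + 1)).eval (Real.cos θ) * Real.sin θ)
          * Real.cos θ ^ (n + 1) := by ring
    _ = Real.sin (((n : ℝ) + 2) * θ) * Real.cos θ ^ (n + 1) := by rw [h1]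
    _ = (Real.sin (((n : ℝ) + 1) * θ)
          + Real.cos (((n : ℝ) + 2) * θ) * Real.sin θ) * Real.cos θ ^ n := by
        rw [pow_succ]; linear_combination (-(Real.cos θ ^ n)) * hsub
    _ = _ := by rw [← h2]; ring

theorem stmt_18 (m : ℕ) (hm : 1 ≤ m) (n : ℕ) (hn : n ≤ 2 * m - 1) :
    ∑ j ∈ Finset.Icc 1 m,
        (Polynomial.Chebyshev.U ℝ (n : ℤ)).eval
            (Real.cos ((2 * j - 1) * Real.pi / (4 * m))) *
          (Real.cos ((2 * j - 1) * Real.pi / (4 * m))) ^ n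
      = m := by
  induction n with
  | zero =>
    simp only [Nat.cast_zero, Polynomial.Chebyshev.U_zero, Polynomial.eval_one, pow_zero,
      mul_one, Finset.sum_const, Nat.card_Icc, smul_eq_mul, mul_one]
    norm_num
  | succ n ih =>
    have hsin : ∀ j ∈ Finset.Icc 1 m,
        Real.sin ((2 * (j:ℝ) - 1) * Real.pi / (4 * m)) ≠ 0 := by
      intro j hj
      rw [Finset.mem_Icc] at hj
      apply ne_of_gt
      apply Real.sin_pos_of_pos_of_lt_pi
      · have h1 : (1:ℝ) ≤ (j:ℝ) := by exact_mod_cast hj.1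
        have : (0:ℝ) < 2 * (j:ℝ) - 1 := by linarith
        positivity
      · rw [div_lt_iff₀ (by positivity)]
        have h2 : (j:ℝ) ≤ m := by exact_mod_cast hj.2
        nlinarith [Real.pi_pos]
    have key : ∀ j ∈ Finset.Icc 1 m,
        (Polynomial.Chebyshev.U ℝ ((n + 1 : ℕ) : ℤ)).eval
            (Real.cos ((2 * j - 1) * Real.pi / (4 * m))) *
          (Real.cos ((2 * j - 1) * Real.pi / (4 * m))) ^ (n + 1)
        = (Polynomial.Chebyshev.U ℝ (n : ℤ)).eval
            (Real.cos ((2 * j - 1) * Real.pi / (4 * m))) *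
          (Real.cos ((2 * j - 1) * Real.pi / (4 * m))) ^ n
          + Real.cos (((n + 2 : ℕ) : ℝ) * ((2 * j - 1) * Real.pi / (4 * m))) *
          (Real.cos ((2 * j - 1) * Real.pi / (4 * m))) ^ n := by
      intro j hj
      have := step ((2 * (j:ℝ) - 1) * Real.pi / (4 * m)) (hsin j hj) n
      push_cast
      push_cast at this
      exact this
    rw [Finset.sum_congr rfl key, Finset.sum_add_distrib, ih (by omega),
      Ezero m hm n (n + 2) ⟨n + 1, by ring⟩ (le_refl _) (by omega), add_zero]
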